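/- Let w ∈ ℝ^n with w_i > 0 for all i, let 1 ≤ k ≤ n, let p ∈ (0,1]^n with Σ_i p_i = k, and let D_max = ‖pps(k,w) − p‖₁. For each D ∈ [0, D_max] the Δ-stable PPS program has a unique optimal solution q(D), with q(0) = p and q(D_max) = pps(k,w); and the solutions are coordinatewise monotone in D: for every i and every 0 ≤ D ≤ D' ≤ D_max, q_i(D) lies in the closed interval with endpoints p_i and q_i(D'). In particular each coordinate q_i(D) moves monotonically from p_i toward the PPS probability pps(k,w)_i as D increases. -/

import Mathlib

open Finset


lemma sum_two {n : ℕ} (f : Fin n → ℝ) (i j : Fin n) (hij : i ≠ j)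
    (h : ∀ l, l ≠ i → l ≠ j → f l = 0) : ∑ l, f l = f i + f j := by
  classical
  have h2 : ∑ l, f l = ∑ l ∈ ({i, j} : Finset (Fin n)), f l := by
    refine (Finset.sum_subset (Finset.subset_univ _) ?_).symm
    intro x _ hx
    simp only [Finset.mem_insert, Finset.mem_singleton] at hx
    push_neg at hx
    exact h x hx.1 hx.2
  rw [h2, Finset.sum_pair hij]

lemma sum_update2 {n : ℕ} (a b : Fin n → ℝ) (i j : Fin n) (hij : i ≠ j)
    (h : ∀ l, l ≠ i → l ≠ j → b l = a l) :
    ∑ l, b l = ∑ l, a l + ((b i - a i) + (b j - a j)) := by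
  have h1 := sum_two (fun l => b l - a l) i j hij
    (fun l h1 h2 => by rw [h l h1 h2]; ring)
  have h2 : ∑ l, b l = ∑ l, (a l + (b l - a l)) := Finset.sum_congr rfl (fun l _ => by ring)
  rw [h2, Finset.sum_add_distrib, h1]

lemma abs_eq_two_max (x : ℝ) : |x| = 2 * max x 0 - x := by
  rcases le_total 0 x with h | h
  · rw [abs_of_nonneg h, max_eq_left h]; ring
  · rw [abs_of_nonpos h, max_eq_right h]; ring

lemma abs_eq_two_max' (x : ℝ) : |x| = 2 * max (-x) 0 + x := by
  rcases le_total 0 x with h | h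
  · rw [abs_of_nonneg h, max_eq_right (neg_nonpos.mpr h)]; ring
  · rw [abs_of_nonpos h, max_eq_left (neg_nonneg.mpr h)]; ring

lemma conv_ineq (c x y ε : ℝ) (hc : 0 ≤ c) (hx : 0 < x) (hε : 0 ≤ ε)
    (h : x + ε ≤ y - ε) : c / (x + ε) + c / (y - ε) ≤ c / x + c / y := by
  have hx' : 0 < x + ε := by linarith
  have hy' : 0 < y - ε := lt_of_lt_of_le hx' h
  have hy : 0 < y := by linarith
  rw [div_add_div _ _ (ne_of_gt hx') (ne_of_gt hy'), div_add_div _ _ (ne_of_gt hx) (ne_of_gt hy),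
    div_le_div_iff₀ (by positivity) (by positivity)]
  nlinarith [mul_nonneg (mul_nonneg (mul_nonneg hc (by linarith : (0:ℝ) ≤ x + y)) hε)
    (by linarith : (0:ℝ) ≤ y - x - ε)]

lemma mono_min (n : ℕ) (K : ℝ) (w p : Fin n → ℝ) (D D' : ℝ) (hDD' : D ≤ D')
    (hw : ∀ i, 0 < w i) (hpk : ∑ l, p l = K)
    (q q' : Fin n → ℝ)
    (hq : (∀ i, 0 < q i ∧ q i ≤ 1) ∧ (∑ i, q i = K) ∧ (∑ i, |q i - p i| ≤ D))
    (hq' : (∀ i, 0 < q' i ∧ q' i ≤ 1) ∧ (∑ i, q' i = K) ∧ (∑ i, |q' i - p i| ≤ D'))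
    (hqmin : ∀ r : Fin n → ℝ,
      ((∀ i, 0 < r i ∧ r i ≤ 1) ∧ (∑ i, r i = K) ∧ (∑ i, |r i - p i| ≤ D)) →
      ∑ i, w i ^ 2 / q i ≤ ∑ i, w i ^ 2 / r i)
    (hq'min : ∀ r : Fin n → ℝ,
      ((∀ i, 0 < r i ∧ r i ≤ 1) ∧ (∑ i, r i = K) ∧ (∑ i, |r i - p i| ≤ D')) →
      ∑ i, w i ^ 2 / q' i ≤ ∑ i, w i ^ 2 / r i)
    (hquniq : ∀ r : Fin n → ℝ,
      ((∀ i, 0 < r i ∧ r i ≤ 1) ∧ (∑ i, r i = K) ∧ (∑ i, |r i - p i| ≤ D)) →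
      ∑ i, w i ^ 2 / r i = ∑ i, w i ^ 2 / q i → r = q)
    (hq'uniq : ∀ r : Fin n → ℝ,
      ((∀ i, 0 < r i ∧ r i ≤ 1) ∧ (∑ i, r i = K) ∧ (∑ i, |r i - p i| ≤ D')) →
      ∑ i, w i ^ 2 / r i = ∑ i, w i ^ 2 / q' i → r = q')
    (i : Fin n) : q i ∈ Set.uIcc (p i) (q' i) := by
  classical
  by_contra hcon
  rw [Set.mem_uIcc] at hcon
  push_neg at hcon
  obtain ⟨hc1, hc2⟩ := hcon
  have hcase : (p i < q i ∧ q' i < q i) ∨ (q i < p i ∧ q i < q' i) := by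
    rcases le_or_gt (p i) (q i) with h | h
    · exact Or.inl ⟨hc2 (hc1 h).le, hc1 h⟩
    · have h2 : q i < q' i := by
        by_contra hle
        exact absurd (hc2 (not_lt.mp hle)) (not_lt.mpr h.le)
      exact Or.inr ⟨h, h2⟩
  rcases hcase with ⟨hA1, hA2⟩ | ⟨hB1, hB2⟩
  · -- Case A : q i moved up beyond both p i and q' i
    by_cases hj : ∃ j, p j < q' j ∧ q j < q' j
    · obtain ⟨j, hj1, hj2⟩ := hj
      have hij : i ≠ j := fun h => by rw [h] at hA2; exact absurd hj2 (not_lt.mpr hA2.le)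
      set ε : ℝ := min (min ((q i - q' i) / 2) (q i - p i))
        (min ((q' j - q j) / 2) (q' j - p j)) with hεdef
      have hε : 0 < ε := by
        apply lt_min <;> apply lt_min <;> linarith
      have E1 : ε ≤ (q i - q' i) / 2 := le_trans (min_le_left _ _) (min_le_left _ _)
      have E2 : ε ≤ q i - p i := le_trans (min_le_left _ _) (min_le_right _ _)
      have E3 : ε ≤ (q' j - q j) / 2 := le_trans (min_le_right _ _) (min_le_left _ _)
      have E4 : ε ≤ q' j - p j := le_trans (min_le_right _ _) (min_le_right _ _)
      set qt : Fin n → ℝ := fun l => if l = i then q l - ε else if l = j then q l + ε else q l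
        with hqtdef
      set qt' : Fin n → ℝ := fun l => if l = i then q' l + ε else if l = j then q' l - ε else q' l
        with hqt'def
      have hqt_i : qt i = q i - ε := by simp [hqtdef]
      have hqt_j : qt j = q j + ε := by simp [hqtdef, Ne.symm hij]
      have hqt_o : ∀ l, l ≠ i → l ≠ j → qt l = q l := fun l h1 h2 => by
        simp [hqtdef, h1, h2]
      have hqt'_i : qt' i = q' i + ε := by simp [hqt'def]
      have hqt'_j : qt' j = q' j - ε := by simp [hqt'def, Ne.symm hij]
      have hqt'_o : ∀ l, l ≠ i → l ≠ j → qt' l = q' l := fun l h1 h2 => by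
        simp [hqt'def, h1, h2]
      have hq'i0 := (hq'.1 i).1
      have hqj0 := (hq.1 j).1
      have hqi1 := (hq.1 i).2
      have hq'j1 := (hq'.1 j).2
      -- Feasibility of qt at budget D
      have hqtfeas : (∀ l, 0 < qt l ∧ qt l ≤ 1) ∧ (∑ l, qt l = K) ∧ (∑ l, |qt l - p l| ≤ D) := by
        refine ⟨?_, ?_, ?_⟩
        · intro l
          by_cases h1 : l = i
          · subst h1; rw [hqt_i]; constructor <;> linarith
          by_cases h2 : l = j
          · subst h2; rw [hqt_j]; constructor <;> linarith
          · rw [hqt_o l h1 h2]; exact hq.1 l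
        · rw [sum_update2 q qt i j hij hqt_o, hqt_i, hqt_j, hq.2.1]; ring
        · have hsum := sum_update2 (fun l => |q l - p l|) (fun l => |qt l - p l|) i j hij
            (fun l h1 h2 => by rw [hqt_o l h1 h2])
          have di : |qt i - p i| = |q i - p i| - ε := by
            rw [hqt_i, abs_of_nonneg (by linarith : (0:ℝ) ≤ q i - ε - p i),
              abs_of_nonneg (by linarith : (0:ℝ) ≤ q i - p i)]
            ring
          have dj : |qt j - p j| ≤ |q j - p j| + ε := by
            have e1 : qt j - p j = (q j - p j) + ε := by rw [hqt_j]; ring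
            rw [e1]
            have := abs_add_le (q j - p j) ε
            rw [abs_of_nonneg hε.le] at this
            linarith
          have := hq.2.2
          rw [hsum]
          linarith
      -- Feasibility of qt' at budget D'
      have hqt'feas : (∀ l, 0 < qt' l ∧ qt' l ≤ 1) ∧ (∑ l, qt' l = K) ∧
          (∑ l, |qt' l - p l| ≤ D') := by
        refine ⟨?_, ?_, ?_⟩
        · intro l
          by_cases h1 : l = i
          · subst h1; rw [hqt'_i]; constructor <;> linarith
          by_cases h2 : l = j
          · subst h2; rw [hqt'_j]; constructor <;> linarith
          · rw [hqt'_o l h1 h2]; exact hq'.1 l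
        · rw [sum_update2 q' qt' i j hij hqt'_o, hqt'_i, hqt'_j, hq'.2.1]; ring
        · have hsum := sum_update2 (fun l => |q' l - p l|) (fun l => |qt' l - p l|) i j hij
            (fun l h1 h2 => by rw [hqt'_o l h1 h2])
          have dj : |qt' j - p j| = |q' j - p j| - ε := by
            rw [hqt'_j, abs_of_nonneg (by linarith : (0:ℝ) ≤ q' j - ε - p j),
              abs_of_nonneg (by linarith : (0:ℝ) ≤ q' j - p j)]
            ring
          have di : |qt' i - p i| ≤ |q' i - p i| + ε := by
            have e1 : qt' i - p i = (q' i - p i) + ε := by rw [hqt'_i]; ring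
            rw [e1]
            have := abs_add_le (q' i - p i) ε
            rw [abs_of_nonneg hε.le] at this
            linarith
          have := hq'.2.2
          rw [hsum]
          linarith
      -- objective comparison
      have G1 := sum_update2 (fun l => w l ^ 2 / q l) (fun l => w l ^ 2 / qt l) i j hij
        (fun l h1 h2 => by rw [hqt_o l h1 h2])
      have G2 := sum_update2 (fun l => w l ^ 2 / q' l) (fun l => w l ^ 2 / qt' l) i j hij
        (fun l h1 h2 => by rw [hqt'_o l h1 h2])
      rw [hqt_i, hqt_j] at G1
      rw [hqt'_i, hqt'_j] at G2
      have convi : w i ^ 2 / (q' i + ε) + w i ^ 2 / (q i - ε)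
          ≤ w i ^ 2 / q' i + w i ^ 2 / q i :=
        conv_ineq _ _ _ _ (by positivity) hq'i0 hε.le (by linarith)
      have convj : w j ^ 2 / (q j + ε) + w j ^ 2 / (q' j - ε)
          ≤ w j ^ 2 / q j + w j ^ 2 / q' j :=
        conv_ineq _ _ _ _ (by positivity) hqj0 hε.le (by linarith)
      have o1 : ∑ l, w l ^ 2 / q l ≤ ∑ l, w l ^ 2 / qt l := hqmin qt hqtfeas
      have o2 : ∑ l, w l ^ 2 / q' l ≤ ∑ l, w l ^ 2 / qt' l := hq'min qt' hqt'feas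
      have eq1 : ∑ l, w l ^ 2 / qt l = ∑ l, w l ^ 2 / q l := by linarith
      have hcontra := congrFun (hquniq qt hqtfeas eq1) i
      rw [hqt_i] at hcontra
      linarith
    · push_neg at hj
      have S'S : ∑ l, max (q' l - p l) 0 < ∑ l, max (q l - p l) 0 := by
        apply Finset.sum_lt_sum
        · intro l _
          rcases le_or_gt (q' l) (p l) with h | h
          · rw [max_eq_right (by linarith : q' l - p l ≤ 0)]
            exact le_max_right _ _
          · have := hj l h
            exact max_le_max (by linarith) le_rfl
        · refine ⟨i, Finset.mem_univ _, ?_⟩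
          have h1 : max (q i - p i) 0 = q i - p i := max_eq_left (by linarith)
          rw [h1]
          exact max_lt (by linarith) (by linarith)
      have expand : ∀ (r : Fin n → ℝ), (∑ l, r l = K) →
          ∑ l, |r l - p l| = 2 * ∑ l, max (r l - p l) 0 := by
        intro r hr
        have h1 : ∑ l, |r l - p l| = ∑ l, (2 * max (r l - p l) 0 - (r l - p l)) :=
          Finset.sum_congr rfl fun l _ => abs_eq_two_max _
        rw [h1, Finset.sum_sub_distrib, ← Finset.mul_sum]
        have h2 : ∑ l, (r l - p l) = 0 := by
          rw [Finset.sum_sub_distrib, hr, hpk]; ring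
        rw [h2]; ring
      have e1 := expand q hq.2.1
      have e2 := expand q' hq'.2.1
      have hb : ∑ l, |q' l - p l| ≤ D := by
        have := hq.2.2
        rw [e2]; linarith
      have hq'D : (∀ l, 0 < q' l ∧ q' l ≤ 1) ∧ (∑ l, q' l = K) ∧ (∑ l, |q' l - p l| ≤ D) :=
        ⟨hq'.1, hq'.2.1, hb⟩
      have hqD' : (∀ l, 0 < q l ∧ q l ≤ 1) ∧ (∑ l, q l = K) ∧ (∑ l, |q l - p l| ≤ D') :=
        ⟨hq.1, hq.2.1, le_trans hq.2.2 hDD'⟩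
      have g1 : ∑ l, w l ^ 2 / q l ≤ ∑ l, w l ^ 2 / q' l := hqmin q' hq'D
      have g2 : ∑ l, w l ^ 2 / q' l ≤ ∑ l, w l ^ 2 / q l := hq'min q hqD'
      have heq : q = q' := hq'uniq q hqD' (le_antisymm g2 g1).symm
      have := congrFun heq i
      linarith
  · -- Case B : q i moved down below both p i and q' i
    by_cases hj : ∃ j, q' j < p j ∧ q' j < q j
    · obtain ⟨j, hj1, hj2⟩ := hj
      have hij : i ≠ j := fun h => by rw [h] at hB2; exact absurd hj2 (not_lt.mpr hB2.le)
      set ε : ℝ := min (min ((q' i - q i) / 2) (p i - q i))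
        (min ((q j - q' j) / 2) (p j - q' j)) with hεdef
      have hε : 0 < ε := by
        apply lt_min <;> apply lt_min <;> linarith
      have E1 : ε ≤ (q' i - q i) / 2 := le_trans (min_le_left _ _) (min_le_left _ _)
      have E2 : ε ≤ p i - q i := le_trans (min_le_left _ _) (min_le_right _ _)
      have E3 : ε ≤ (q j - q' j) / 2 := le_trans (min_le_right _ _) (min_le_left _ _)
      have E4 : ε ≤ p j - q' j := le_trans (min_le_right _ _) (min_le_right _ _)
      set qt : Fin n → ℝ := fun l => if l = i then q l + ε else if l = j then q l - ε else q l
        with hqtdef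
      set qt' : Fin n → ℝ := fun l => if l = i then q' l - ε else if l = j then q' l + ε else q' l
        with hqt'def
      have hqt_i : qt i = q i + ε := by simp [hqtdef]
      have hqt_j : qt j = q j - ε := by simp [hqtdef, Ne.symm hij]
      have hqt_o : ∀ l, l ≠ i → l ≠ j → qt l = q l := fun l h1 h2 => by
        simp [hqtdef, h1, h2]
      have hqt'_i : qt' i = q' i - ε := by simp [hqt'def]
      have hqt'_j : qt' j = q' j + ε := by simp [hqt'def, Ne.symm hij]
      have hqt'_o : ∀ l, l ≠ i → l ≠ j → qt' l = q' l := fun l h1 h2 => by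
        simp [hqt'def, h1, h2]
      have hqi0 := (hq.1 i).1
      have hq'j0 := (hq'.1 j).1
      have hq'i1 := (hq'.1 i).2
      have hqj1 := (hq.1 j).2
      have hqtfeas : (∀ l, 0 < qt l ∧ qt l ≤ 1) ∧ (∑ l, qt l = K) ∧ (∑ l, |qt l - p l| ≤ D) := by
        refine ⟨?_, ?_, ?_⟩
        · intro l
          by_cases h1 : l = i
          · subst h1; rw [hqt_i]; constructor <;> [linarith; linarith [hq'i1]]
          by_cases h2 : l = j
          · subst h2; rw [hqt_j]; constructor <;> [linarith [hq'j0]; linarith [hqj1]]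
          · rw [hqt_o l h1 h2]; exact hq.1 l
        · rw [sum_update2 q qt i j hij hqt_o, hqt_i, hqt_j, hq.2.1]; ring
        · have hsum := sum_update2 (fun l => |q l - p l|) (fun l => |qt l - p l|) i j hij
            (fun l h1 h2 => by rw [hqt_o l h1 h2])
          have di : |qt i - p i| = |q i - p i| - ε := by
            rw [hqt_i, abs_of_nonpos (by linarith : q i + ε - p i ≤ 0),
              abs_of_nonpos (by linarith : q i - p i ≤ 0)]
            ring
          have dj : |qt j - p j| ≤ |q j - p j| + ε := by
            have e1 : qt j - p j = (q j - p j) + -ε := by rw [hqt_j]; ring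
            rw [e1]
            have := abs_add_le (q j - p j) (-ε)
            rw [abs_neg, abs_of_nonneg hε.le] at this
            linarith
          have := hq.2.2
          rw [hsum]
          linarith
      have hqt'feas : (∀ l, 0 < qt' l ∧ qt' l ≤ 1) ∧ (∑ l, qt' l = K) ∧
          (∑ l, |qt' l - p l| ≤ D') := by
        refine ⟨?_, ?_, ?_⟩
        · intro l
          by_cases h1 : l = i
          · subst h1; rw [hqt'_i]; constructor <;> [linarith [hqi0]; linarith [hq'i1]]
          by_cases h2 : l = j
          · subst h2; rw [hqt'_j]; constructor <;> [linarith [hq'j0]; linarith [hqj1]]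
          · rw [hqt'_o l h1 h2]; exact hq'.1 l
        · rw [sum_update2 q' qt' i j hij hqt'_o, hqt'_i, hqt'_j, hq'.2.1]; ring
        · have hsum := sum_update2 (fun l => |q' l - p l|) (fun l => |qt' l - p l|) i j hij
            (fun l h1 h2 => by rw [hqt'_o l h1 h2])
          have dj : |qt' j - p j| = |q' j - p j| - ε := by
            rw [hqt'_j, abs_of_nonpos (by linarith : q' j + ε - p j ≤ 0),
              abs_of_nonpos (by linarith : q' j - p j ≤ 0)]
            ring
          have di : |qt' i - p i| ≤ |q' i - p i| + ε := by
            have e1 : qt' i - p i = (q' i - p i) + -ε := by rw [hqt'_i]; ring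
            rw [e1]
            have := abs_add_le (q' i - p i) (-ε)
            rw [abs_neg, abs_of_nonneg hε.le] at this
            linarith
          have := hq'.2.2
          rw [hsum]
          linarith
      have G1 := sum_update2 (fun l => w l ^ 2 / q l) (fun l => w l ^ 2 / qt l) i j hij
        (fun l h1 h2 => by rw [hqt_o l h1 h2])
      have G2 := sum_update2 (fun l => w l ^ 2 / q' l) (fun l => w l ^ 2 / qt' l) i j hij
        (fun l h1 h2 => by rw [hqt'_o l h1 h2])
      rw [hqt_i, hqt_j] at G1
      rw [hqt'_i, hqt'_j] at G2
      have convi : w i ^ 2 / (q i + ε) + w i ^ 2 / (q' i - ε)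
          ≤ w i ^ 2 / q i + w i ^ 2 / q' i :=
        conv_ineq _ _ _ _ (by positivity) hqi0 hε.le (by linarith)
      have convj : w j ^ 2 / (q' j + ε) + w j ^ 2 / (q j - ε)
          ≤ w j ^ 2 / q' j + w j ^ 2 / q j :=
        conv_ineq _ _ _ _ (by positivity) hq'j0 hε.le (by linarith)
      have o1 : ∑ l, w l ^ 2 / q l ≤ ∑ l, w l ^ 2 / qt l := hqmin qt hqtfeas
      have o2 : ∑ l, w l ^ 2 / q' l ≤ ∑ l, w l ^ 2 / qt' l := hq'min qt' hqt'feas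
      have eq1 : ∑ l, w l ^ 2 / qt l = ∑ l, w l ^ 2 / q l := by linarith
      have hcontra := congrFun (hquniq qt hqtfeas eq1) i
      rw [hqt_i] at hcontra
      linarith
    · push_neg at hj
      have S'S : ∑ l, max (p l - q' l) 0 < ∑ l, max (p l - q l) 0 := by
        apply Finset.sum_lt_sum
        · intro l _
          rcases le_or_gt (p l) (q' l) with h | h
          · rw [max_eq_right (by linarith : p l - q' l ≤ 0)]
            exact le_max_right _ _
          · have := hj l h
            exact max_le_max (by linarith) le_rfl
        · refine ⟨i, Finset.mem_univ _, ?_⟩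
          have h1 : max (p i - q i) 0 = p i - q i := max_eq_left (by linarith)
          rw [h1]
          exact max_lt (by linarith) (by linarith)
      have expand : ∀ (r : Fin n → ℝ), (∑ l, r l = K) →
          ∑ l, |r l - p l| = 2 * ∑ l, max (p l - r l) 0 := by
        intro r hr
        have h1 : ∑ l, |r l - p l| = ∑ l, (2 * max (-(r l - p l)) 0 + (r l - p l)) :=
          Finset.sum_congr rfl fun l _ => abs_eq_two_max' _
        have h1' : ∑ l, (2 * max (-(r l - p l)) 0 + (r l - p l))
            = ∑ l, (2 * max (p l - r l) 0 + (r l - p l)) :=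
          Finset.sum_congr rfl fun l _ => by ring_nf
        rw [h1, h1', Finset.sum_add_distrib, ← Finset.mul_sum]
        have h2 : ∑ l, (r l - p l) = 0 := by
          rw [Finset.sum_sub_distrib, hr, hpk]; ring
        rw [h2]; ring
      have e1 := expand q hq.2.1
      have e2 := expand q' hq'.2.1
      have hb : ∑ l, |q' l - p l| ≤ D := by
        have := hq.2.2
        rw [e2]; linarith
      have hq'D : (∀ l, 0 < q' l ∧ q' l ≤ 1) ∧ (∑ l, q' l = K) ∧ (∑ l, |q' l - p l| ≤ D) :=
        ⟨hq'.1, hq'.2.1, hb⟩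
      have hqD' : (∀ l, 0 < q l ∧ q l ≤ 1) ∧ (∑ l, q l = K) ∧ (∑ l, |q l - p l| ≤ D') :=
        ⟨hq.1, hq.2.1, le_trans hq.2.2 hDD'⟩
      have g1 : ∑ l, w l ^ 2 / q l ≤ ∑ l, w l ^ 2 / q' l := hqmin q' hq'D
      have g2 : ∑ l, w l ^ 2 / q' l ≤ ∑ l, w l ^ 2 / q l := hq'min q hqD'
      have heq : q = q' := hq'uniq q hqD' (le_antisymm g2 g1).symm
      have := congrFun heq i
      linarith



lemma exists_min (n : ℕ) (K : ℝ) (w p : Fin n → ℝ) (D : ℝ)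
    (hw : ∀ i, 0 < w i) (hp0 : ∀ i, 0 < p i) (hp1 : ∀ i, p i ≤ 1)
    (hpk : ∑ i, p i = K) (hD : 0 ≤ D) :
    ∃ q : Fin n → ℝ,
      ((∀ i, 0 < q i ∧ q i ≤ 1) ∧ (∑ i, q i = K) ∧ (∑ i, |q i - p i| ≤ D)) ∧
      ∀ r : Fin n → ℝ,
        ((∀ i, 0 < r i ∧ r i ≤ 1) ∧ (∑ i, r i = K) ∧ (∑ i, |r i - p i| ≤ D)) →
        ∑ i, w i ^ 2 / q i ≤ ∑ i, w i ^ 2 / r i := by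
  classical
  set M : ℝ := ∑ i, w i ^ 2 / p i with hM
  have hM0 : 0 ≤ M := Finset.sum_nonneg fun i _ => by
    have := hp0 i; positivity
  set e : Fin n → ℝ := fun i => min (p i) (w i ^ 2 / (M + 1)) with he
  have he0 : ∀ i, 0 < e i := fun i => lt_min (hp0 i) (by have := hw i; positivity)
  set KS : Set (Fin n → ℝ) :=
    (Set.pi Set.univ fun i => Set.Icc (e i) (1:ℝ)) ∩
      ({q | ∑ i, q i = K} ∩ {q | ∑ i, |q i - p i| ≤ D}) with hKS
  have csum : Continuous fun q : Fin n → ℝ => ∑ i, q i :=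
    continuous_finset_sum _ fun i _ => continuous_apply i
  have cabs : Continuous fun q : Fin n → ℝ => ∑ i, |q i - p i| :=
    continuous_finset_sum _ fun i _ => ((continuous_apply i).sub continuous_const).abs
  have hKC : IsCompact KS :=
    (isCompact_univ_pi fun i => isCompact_Icc).inter_right
      ((isClosed_eq csum continuous_const).inter (isClosed_le cabs continuous_const))
  have hpK : p ∈ KS := by
    refine ⟨fun i _ => ⟨min_le_left _ _, hp1 i⟩, hpk, ?_⟩
    simp
    exact hD
  have hg : ContinuousOn (fun q : Fin n → ℝ => ∑ i, w i ^ 2 / q i) KS := by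
    apply continuousOn_finset_sum
    intro i _
    exact continuousOn_const.div (continuous_apply i).continuousOn
      (fun q hq => ne_of_gt (lt_of_lt_of_le (he0 i) (hq.1 i (Set.mem_univ i)).1))
  obtain ⟨q, hqK, hqmin⟩ := hKC.exists_isMinOn ⟨p, hpK⟩ hg
  have hqfeas : (∀ i, 0 < q i ∧ q i ≤ 1) ∧ (∑ i, q i = K) ∧ (∑ i, |q i - p i| ≤ D) :=
    ⟨fun i => ⟨lt_of_lt_of_le (he0 i) (hqK.1 i (Set.mem_univ i)).1, (hqK.1 i (Set.mem_univ i)).2⟩,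
      hqK.2.1, hqK.2.2⟩
  refine ⟨q, hqfeas, fun r hr => ?_⟩
  by_cases hre : ∀ i, e i ≤ r i
  · exact hqmin ⟨fun i _ => ⟨hre i, (hr.1 i).2⟩, hr.2.1, hr.2.2⟩
  · push_neg at hre
    obtain ⟨i, hi⟩ := hre
    have h1 : ∑ l, w l ^ 2 / r l ≥ w i ^ 2 / r i :=
      Finset.single_le_sum (f := fun l => w l ^ 2 / r l)
        (fun l _ => by have := (hr.1 l).1; positivity) (Finset.mem_univ i)
    have h2 : w i ^ 2 / e i < w i ^ 2 / r i :=
      div_lt_div_of_pos_left (by have := hw i; positivity) (hr.1 i).1 hi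
    have h3 : M + 1 ≤ w i ^ 2 / e i := by
      have hb : e i ≤ w i ^ 2 / (M + 1) := min_le_right _ _
      have := div_le_div_of_nonneg_left (by positivity : (0:ℝ) ≤ w i ^ 2) (he0 i) hb
      calc M + 1 = w i ^ 2 / (w i ^ 2 / (M + 1)) := by
            rw [div_div_eq_mul_div]
            rw [mul_comm, mul_div_assoc, div_self (by have := hw i; positivity : w i ^ 2 ≠ 0), mul_one]
        _ ≤ w i ^ 2 / e i := this
    have hgq : ∑ l, w l ^ 2 / q l ≤ M := hqmin hpK
    linarith


lemma mid_le (c a b : ℝ) (hc : 0 ≤ c) (ha : 0 < a) (hb : 0 < b) :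
    c / ((a + b) / 2) ≤ (c / a + c / b) / 2 := by
  rw [← sub_nonneg]
  have key : (c / a + c / b) / 2 - c / ((a + b) / 2) = c * (a - b)^2 / (2 * a * b * (a + b)) := by
    field_simp; ring
  rw [key]; positivity

lemma mid_lt (c a b : ℝ) (hc : 0 < c) (ha : 0 < a) (hb : 0 < b) (hab : a ≠ b) :
    c / ((a + b) / 2) < (c / a + c / b) / 2 := by
  rw [← sub_pos]
  have key : (c / a + c / b) / 2 - c / ((a + b) / 2) = c * (a - b)^2 / (2 * a * b * (a + b)) := by
    field_simp; ring
  rw [key]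
  have h1 : 0 < (a - b) ^ 2 :=
    lt_of_le_of_ne (sq_nonneg _) (Ne.symm (pow_ne_zero 2 (sub_ne_zero.mpr hab)))
  exact div_pos (mul_pos hc h1) (by positivity)

lemma unique_min (n : ℕ) (K : ℝ) (w p : Fin n → ℝ) (D : ℝ)
    (hw : ∀ i, 0 < w i)
    (q r : Fin n → ℝ)
    (hq : (∀ i, 0 < q i ∧ q i ≤ 1) ∧ (∑ i, q i = K) ∧ (∑ i, |q i - p i| ≤ D))
    (hr : (∀ i, 0 < r i ∧ r i ≤ 1) ∧ (∑ i, r i = K) ∧ (∑ i, |r i - p i| ≤ D))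
    (hqmin : ∀ s : Fin n → ℝ,
      ((∀ i, 0 < s i ∧ s i ≤ 1) ∧ (∑ i, s i = K) ∧ (∑ i, |s i - p i| ≤ D)) →
      ∑ i, w i ^ 2 / q i ≤ ∑ i, w i ^ 2 / s i)
    (heq : ∑ i, w i ^ 2 / r i = ∑ i, w i ^ 2 / q i) : r = q := by
  by_contra hne
  obtain ⟨i0, hi0⟩ := Function.ne_iff.mp hne
  set m : Fin n → ℝ := fun i => (r i + q i) / 2 with hm
  have habs : ∀ i, |m i - p i| ≤ (|r i - p i| + |q i - p i|) / 2 := by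
    intro i
    have h : m i - p i = ((r i - p i) + (q i - p i)) / 2 := by simp only [hm]; ring
    rw [h, abs_div, abs_two]
    have := abs_add_le (r i - p i) (q i - p i)
    linarith
  have hmf : (∀ i, 0 < m i ∧ m i ≤ 1) ∧ (∑ i, m i = K) ∧ (∑ i, |m i - p i| ≤ D) := by
    refine ⟨fun i => ⟨by have := (hq.1 i).1; have := (hr.1 i).1; simp only [hm]; linarith,
      by have := (hq.1 i).2; have := (hr.1 i).2; simp only [hm]; linarith⟩, ?_, ?_⟩
    · simp only [hm]
      rw [← Finset.sum_div, Finset.sum_add_distrib, hq.2.1, hr.2.1]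
      ring
    · calc ∑ i, |m i - p i| ≤ ∑ i, (|r i - p i| + |q i - p i|) / 2 :=
            Finset.sum_le_sum fun i _ => habs i
        _ ≤ D := by
            rw [← Finset.sum_div, Finset.sum_add_distrib]
            have := hq.2.2; have := hr.2.2; linarith
  have hlt : ∑ i, w i ^ 2 / m i < ∑ i, w i ^ 2 / q i := by
    have h1 : ∑ i, w i ^ 2 / m i < ∑ i, (w i ^ 2 / r i + w i ^ 2 / q i) / 2 := by
      apply Finset.sum_lt_sum
      · exact fun i _ => mid_le _ _ _ (by positivity) (hr.1 i).1 (hq.1 i).1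
      · exact ⟨i0, Finset.mem_univ _,
          mid_lt _ _ _ (by have := hw i0; positivity) (hr.1 i0).1 (hq.1 i0).1 hi0⟩
    have h2 : ∑ i, (w i ^ 2 / r i + w i ^ 2 / q i) / 2
        = (∑ i, w i ^ 2 / r i + ∑ i, w i ^ 2 / q i) / 2 := by
      rw [← Finset.sum_div, Finset.sum_add_distrib]
    rw [h2, heq] at h1
    linarith
  exact absurd (hqmin m hmf) (not_le.mpr hlt)


lemma tangent (c s x : ℝ) (hc : 0 ≤ c) (hs : 0 < s) (hx : 0 < x) :
    c / s - c / s ^ 2 * (x - s) ≤ c / x := by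
  rw [← sub_nonneg]
  have key : c / x - (c / s - c / s ^ 2 * (x - s)) = c * (x - s)^2 / (x * s^2) := by
    field_simp; ring
  rw [key]; positivity

lemma pps_min (n : ℕ) (K : ℝ) (w : Fin n → ℝ) (τ : ℝ)
    (hw : ∀ i, 0 < w i) (hτ : 0 < τ)
    (hτk : ∑ i, min 1 (w i / τ) = K) (r : Fin n → ℝ)
    (hr0 : ∀ i, 0 < r i) (hr1 : ∀ i, r i ≤ 1) (hrk : ∑ i, r i = K) :
    ∑ i, w i ^ 2 / min 1 (w i / τ) ≤ ∑ i, w i ^ 2 / r i := by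
  set s : Fin n → ℝ := fun i => min 1 (w i / τ) with hsdef
  have hs0 : ∀ i, 0 < s i := fun i => lt_min one_pos (div_pos (hw i) hτ)
  have h1 : ∀ i, w i ^ 2 / s i - w i ^ 2 / (s i) ^ 2 * (r i - s i) ≤ w i ^ 2 / r i :=
    fun i => tangent _ _ _ (by positivity) (hs0 i) (hr0 i)
  have h2 : ∀ i, w i ^ 2 / (s i) ^ 2 * (r i - s i) ≤ τ ^ 2 * (r i - s i) := by
    intro i
    rcases le_or_gt (w i / τ) 1 with h | h
    · have hs : s i = w i / τ := min_eq_right h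
      have hco : w i ^ 2 / (s i) ^ 2 = τ ^ 2 := by
        have hwne : w i ≠ 0 := ne_of_gt (hw i)
        rw [hs]
        field_simp
      rw [hco]
    · have hs : s i = 1 := min_eq_left h.le
      have hτw : τ < w i := (one_lt_div hτ).mp h
      have hr1i := hr1 i
      rw [hs]
      have : w i ^ 2 / 1 ^ 2 = w i ^ 2 := by norm_num
      rw [this]
      have hw2 : τ ^ 2 ≤ w i ^ 2 := by nlinarith
      nlinarith [mul_nonneg (sub_nonneg.mpr hw2) (sub_nonneg.mpr hr1i)]
  have A : ∑ i, (w i ^ 2 / s i - w i ^ 2 / (s i) ^ 2 * (r i - s i)) ≤ ∑ i, w i ^ 2 / r i :=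
    Finset.sum_le_sum fun i _ => h1 i
  have B : ∑ i, w i ^ 2 / (s i) ^ 2 * (r i - s i) ≤ ∑ i, τ ^ 2 * (r i - s i) :=
    Finset.sum_le_sum fun i _ => h2 i
  have C : ∑ i, τ ^ 2 * (r i - s i) = 0 := by
    rw [← Finset.mul_sum, Finset.sum_sub_distrib, hrk, hτk]; ring
  rw [Finset.sum_sub_distrib] at A
  linarith



/-- **Uniqueness and coordinatewise monotonicity of the Δ-stable PPS solutions.**
For weights `w i > 0`, `1 ≤ k ≤ n`, current probabilities `p ∈ (0,1]^n` with `∑ p = k`,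
and `Dmax = ‖pps(k,w) − p‖₁` (where `pps(k,w) i = min 1 (w i / τ)` for a threshold
`τ > 0` with `∑ i, min 1 (w i / τ) = k`): for each `D ∈ [0, Dmax]` the Δ-stable PPS
program has a unique optimal solution `Q D`, with `Q 0 = p`, `Q Dmax = pps(k,w)`, and
for all `0 ≤ D ≤ D' ≤ Dmax` and every `i`, `Q D i` lies in the closed interval with
endpoints `p i` and `Q D' i`. -/
theorem delta_stable_pps_unique_monotone (n k : ℕ) (w p : Fin n → ℝ)
    (hw : ∀ i, 0 < w i) (hk1 : 1 ≤ k) (hkn : k ≤ n)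
    (hp0 : ∀ i, 0 < p i) (hp1 : ∀ i, p i ≤ 1) (hpk : ∑ i, p i = (k : ℝ))
    (τ : ℝ) (hτ : 0 < τ) (hτk : ∑ i, min 1 (w i / τ) = (k : ℝ)) :
    let ppsv : Fin n → ℝ := fun i => min 1 (w i / τ)
    let Dmax : ℝ := ∑ i, |ppsv i - p i|
    let Feas : ℝ → (Fin n → ℝ) → Prop := fun D q =>
      (∀ i, 0 < q i ∧ q i ≤ 1) ∧ (∑ i, q i = (k : ℝ)) ∧ (∑ i, |q i - p i| ≤ D)
    ∃ Q : ℝ → Fin n → ℝ,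
      (∀ D, 0 ≤ D → D ≤ Dmax →
        Feas D (Q D) ∧
        ∀ q : Fin n → ℝ, Feas D q →
          (∑ i, w i ^ 2 / Q D i ≤ ∑ i, w i ^ 2 / q i) ∧
          ((∑ i, w i ^ 2 / q i = ∑ i, w i ^ 2 / Q D i) → q = Q D)) ∧
      Q 0 = p ∧ Q Dmax = ppsv ∧
      (∀ (i : Fin n) (D D' : ℝ), 0 ≤ D → D ≤ D' → D' ≤ Dmax →
        Q D i ∈ Set.uIcc (p i) (Q D' i)) := by
  intro ppsv Dmax Feas
  classical
  have hDmax0 : (0:ℝ) ≤ Dmax := Finset.sum_nonneg fun i _ => abs_nonneg _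
  have hex := fun (D : ℝ) (hD : (0:ℝ) ≤ D) =>
    exists_min n (k:ℝ) w p D hw hp0 hp1 hpk hD
  set Q : ℝ → Fin n → ℝ := fun D => if h : 0 ≤ D then Classical.choose (hex D h) else p
    with hQdef
  have hQfeas : ∀ D, ∀ hD : (0:ℝ) ≤ D, Feas D (Q D) := by
    intro D hD
    have := (Classical.choose_spec (hex D hD)).1
    simp only [hQdef, dif_pos hD]
    exact this
  have hQmin : ∀ D, ∀ hD : (0:ℝ) ≤ D, ∀ r, Feas D r →
      ∑ i, w i ^ 2 / Q D i ≤ ∑ i, w i ^ 2 / r i := by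
    intro D hD r hr
    have := (Classical.choose_spec (hex D hD)).2 r hr
    simp only [hQdef, dif_pos hD]
    exact this
  have hQuniq : ∀ D, ∀ hD : (0:ℝ) ≤ D, ∀ r, Feas D r →
      (∑ i, w i ^ 2 / r i = ∑ i, w i ^ 2 / Q D i) → r = Q D := by
    intro D hD r hr heq
    exact unique_min n (k:ℝ) w p D hw (Q D) r (hQfeas D hD) hr (hQmin D hD) heq
  refine ⟨Q, ?_, ?_, ?_, ?_⟩
  · intro D hD _
    exact ⟨hQfeas D hD, fun q hq => ⟨hQmin D hD q hq, fun he => hQuniq D hD q hq he⟩⟩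
  · have h0 := hQfeas 0 le_rfl
    have hz := (Finset.sum_eq_zero_iff_of_nonneg
      (fun i (_ : i ∈ Finset.univ) => abs_nonneg (Q 0 i - p i))).mp
      (le_antisymm h0.2.2 (Finset.sum_nonneg fun i _ => abs_nonneg _))
    funext i
    have := hz i (Finset.mem_univ i)
    rwa [abs_eq_zero, sub_eq_zero] at this
  · have hppsfeas : Feas Dmax ppsv :=
      ⟨fun i => ⟨lt_min one_pos (div_pos (hw i) hτ), min_le_left _ _⟩, hτk, le_rfl⟩
    have h1 : ∑ i, w i ^ 2 / ppsv i ≤ ∑ i, w i ^ 2 / Q Dmax i := by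
      have hQf := hQfeas Dmax hDmax0
      exact pps_min n (k:ℝ) w τ hw hτ hτk (Q Dmax)
        (fun i => (hQf.1 i).1) (fun i => (hQf.1 i).2) hQf.2.1
    have h2 : ∑ i, w i ^ 2 / Q Dmax i ≤ ∑ i, w i ^ 2 / ppsv i :=
      hQmin Dmax hDmax0 ppsv hppsfeas
    exact (hQuniq Dmax hDmax0 ppsv hppsfeas (le_antisymm h1 h2)).symm
  · intro i D D' hD hDD' _
    exact mono_min n (k:ℝ) w p D D' hDD' hw hpk (Q D) (Q D')
      (hQfeas D hD) (hQfeas D' (hD.trans hDD'))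
      (hQmin D hD) (hQmin D' (hD.trans hDD'))
      (hQuniq D hD) (hQuniq D' (hD.trans hDD')) i
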